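/- Let G be a finite group and N a subgroup of G. Then o(N ∩ Z(G)) ≤ o(G), where Z(G) is the center of G. -/

import Mathlib

open Finset

open scoped Classical

section CommAux

variable {A : Type*} [CommGroup A]

/-- A finset closed under the subgroup operations. -/
def IsSubgroupFinset (t : Finset A) : Prop :=
  (1 : A) ∈ t ∧ ∀ x ∈ t, ∀ y ∈ t, x * y⁻¹ ∈ t

namespace IsSubgroupFinset

variable {t : Finset A}

lemma one_mem (ht : IsSubgroupFinset t) : (1 : A) ∈ t := ht.1

lemma inv_mem (ht : IsSubgroupFinset t) {x : A} (hx : x ∈ t) : x⁻¹ ∈ t := by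
  simpa using ht.2 1 ht.1 x hx

lemma mul_mem (ht : IsSubgroupFinset t) {x y : A} (hx : x ∈ t) (hy : y ∈ t) :
    x * y ∈ t := by
  simpa using ht.2 x hx y⁻¹ (ht.inv_mem hy)

lemma pow_mem (ht : IsSubgroupFinset t) {x : A} (hx : x ∈ t) : ∀ n : ℕ, x ^ n ∈ t
  | 0 => by simpa using ht.one_mem
  | n + 1 => by rw [pow_succ]; exact ht.mul_mem (ht.pow_mem hx n) hx

lemma zpow_mem (ht : IsSubgroupFinset t) {x : A} (hx : x ∈ t) : ∀ n : ℤ, x ^ n ∈ t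
  | Int.ofNat n => by simpa using ht.pow_mem hx n
  | Int.negSucc n => by
      rw [zpow_negSucc]; exact ht.inv_mem (ht.pow_mem hx _)

lemma filter_pow (ht : IsSubgroupFinset t) (n : ℕ) :
    IsSubgroupFinset (t.filter fun x => x ^ n = 1) := by
  constructor
  · simp [ht.one_mem]
  · intro x hx y hy
    rw [mem_filter] at hx hy ⊢
    refine ⟨ht.2 x hx.1 y hy.1, ?_⟩
    rw [mul_pow, inv_pow, hx.2, hy.2, inv_one, mul_one]

end IsSubgroupFinset

/-- If `x ^ m = 1` then `x ^ j = x ^ k` whenever `m` divides `j - k`. -/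
lemma zpow_eq_zpow_of_dvd_sub {x : A} {m : ℕ} (hx : x ^ m = 1) {j k : ℤ}
    (h : (m : ℤ) ∣ (j - k)) : x ^ j = x ^ k := by
  obtain ⟨c, hc⟩ := h
  have hj : j = k + (m : ℤ) * c := by linarith
  have hxm : x ^ (m : ℤ) = 1 := by rw [zpow_natCast]; exact hx
  rw [hj, zpow_add, zpow_mul, hxm, one_zpow, mul_one]

/-- counting: the coset has at most as many solutions of `z ^ n = 1` as the subgroup. -/
lemma coset_count_le {t : Finset A} (ht : IsSubgroupFinset t) (g : A) (n : ℕ) :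
    (t.filter fun x => (g * x) ^ n = 1).card ≤ (t.filter fun x => x ^ n = 1).card := by
  rcases (t.filter fun x => (g * x) ^ n = 1).eq_empty_or_nonempty with he | ⟨h0, hh0⟩
  · simp [he]
  · rw [mem_filter] at hh0
    obtain ⟨h0t, h0e⟩ := hh0
    apply Finset.card_le_card_of_injOn (fun x => x * h0⁻¹)
    · intro x hx
      simp only [Finset.mem_coe, mem_filter] at hx ⊢
      refine ⟨ht.2 _ hx.1 _ h0t, ?_⟩
      have h1 : (g * x) ^ n = (g * h0) ^ n := by rw [hx.2, h0e]
      rw [mul_pow, mul_pow] at h1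
      have h2 := mul_left_cancel h1
      rw [mul_pow, inv_pow, h2, mul_inv_cancel]
    · intro a _ b _ hab
      exact mul_right_cancel hab

/-- order identity for elements of `p`-power order. -/
lemma orderOf_eq_one_add_sum {p K : ℕ} (hp : p.Prime) {y : A} (hy : orderOf y ∣ p ^ K) :
    orderOf y = 1 + ∑ k ∈ range K, (p ^ (k + 1) - p ^ k) *
      (if y ^ p ^ k = 1 then 0 else 1) := by
  obtain ⟨j, hjK, hj⟩ := (Nat.dvd_prime_pow hp).1 hy
  have hcond : ∀ k, (y ^ p ^ k = 1) ↔ j ≤ k := by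
    intro k
    rw [← orderOf_dvd_iff_pow_eq_one, hj, Nat.pow_dvd_pow_iff_le_right hp.one_lt]
  have h1 : ∀ k ∈ range K, (p ^ (k + 1) - p ^ k) * (if y ^ p ^ k = 1 then 0 else 1)
      = if k < j then p ^ (k + 1) - p ^ k else 0 := by
    intro k _
    rcases lt_or_ge k j with h | h
    · rw [if_pos h, if_neg, mul_one]
      rw [hcond]; omega
    · rw [if_neg (not_lt.2 h), if_pos ((hcond k).2 h), mul_zero]
  rw [Finset.sum_congr rfl h1, ← Finset.sum_range_add_sum_Ico _ hjK]
  have h2 : ∑ k ∈ range j, (if k < j then p ^ (k + 1) - p ^ k else 0)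
      = ∑ k ∈ range j, (p ^ (k + 1) - p ^ k) :=
    Finset.sum_congr rfl (by intro k hk; rw [if_pos (mem_range.1 hk)])
  have h3 : ∑ k ∈ Ico j K, (if k < j then p ^ (k + 1) - p ^ k else 0) = 0 :=
    Finset.sum_eq_zero (by intro k hk; rw [if_neg (not_lt.2 (mem_Ico.1 hk).1)])
  have hmono : Monotone fun k => p ^ k :=
    fun a b h => Nat.pow_le_pow_right hp.one_lt.le h
  rw [h2, h3, add_zero, Finset.sum_range_tsub hmono, pow_zero, hj]
  have : 1 ≤ p ^ j := Nat.one_le_pow _ _ hp.pos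
  omega

/-- base case: all orders are powers of a fixed prime `p`. -/
lemma coset_sum_le_pPow {p K : ℕ} (hp : p.Prime) (g : A) {t : Finset A}
    (ht : IsSubgroupFinset t) (hg : orderOf g ∣ p ^ K)
    (hord : ∀ x ∈ t, orderOf x ∣ p ^ K) :
    ∑ x ∈ t, orderOf x ≤ ∑ x ∈ t, orderOf (g * x) := by
  have hgx : ∀ x ∈ t, orderOf (g * x) ∣ p ^ K := fun x hx =>
    ((Commute.all g x).orderOf_mul_dvd_lcm).trans (Nat.lcm_dvd hg (hord x hx))
  rw [Finset.sum_congr rfl (fun x hx => orderOf_eq_one_add_sum hp (hord x hx)),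
      Finset.sum_congr rfl (fun x hx => orderOf_eq_one_add_sum hp (hgx x hx)),
      Finset.sum_add_distrib, Finset.sum_add_distrib]
  apply add_le_add (le_refl _)
  have swapL : (∑ x ∈ t, ∑ k ∈ range K,
        (p ^ (k + 1) - p ^ k) * (if x ^ p ^ k = 1 then 0 else 1))
      = ∑ k ∈ range K, ∑ x ∈ t,
        (p ^ (k + 1) - p ^ k) * (if x ^ p ^ k = 1 then 0 else 1) := Finset.sum_comm
  have swapR : (∑ x ∈ t, ∑ k ∈ range K,
        (p ^ (k + 1) - p ^ k) * (if (g * x) ^ p ^ k = 1 then 0 else 1))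
      = ∑ k ∈ range K, ∑ x ∈ t,
        (p ^ (k + 1) - p ^ k) * (if (g * x) ^ p ^ k = 1 then 0 else 1) :=
    Finset.sum_comm
  rw [swapL, swapR]
  apply Finset.sum_le_sum
  intro k _
  rw [← Finset.mul_sum, ← Finset.mul_sum]
  apply Nat.mul_le_mul_left
  have key : ∀ (P : A → Prop) [DecidablePred P],
      (∑ x ∈ t, if P x then 0 else 1) = t.card - (t.filter P).card := by
    intro P _
    rw [Finset.sum_ite, Finset.sum_const, Finset.sum_const, smul_eq_mul, smul_eq_mul,
      mul_zero, mul_one, zero_add]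
    have := Finset.card_filter_add_card_filter_not (s := t) (p := P)
    omega
  rw [key, key]
  have h1 := coset_count_le ht g (p ^ k)
  have h2 : (t.filter fun x => x ^ p ^ k = 1).card ≤ t.card :=
    Finset.card_filter_le _ _
  omega

/-- coprime factorization of the order. -/
lemma orderOf_eq_mul_of_coprime {P N : ℕ} (hP : P ≠ 0) (hN : N ≠ 0)
    (hPN : Nat.Coprime P N) {x : A} (hx : x ^ (P * N) = 1) :
    orderOf x = orderOf (x ^ N) * orderOf (x ^ P) := by
  have hd : orderOf x ∣ P * N := orderOf_dvd_iff_pow_eq_one.2 hx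
  have hab : (Nat.gcd (orderOf x) P).Coprime (Nat.gcd (orderOf x) N) :=
    Nat.Coprime.coprime_dvd_left (Nat.gcd_dvd_right _ _)
      (Nat.Coprime.coprime_dvd_right (Nat.gcd_dvd_right _ _) hPN)
  have h1 : Nat.gcd (orderOf x) P * Nat.gcd (orderOf x) N ∣ orderOf x :=
    hab.mul_dvd_of_dvd_of_dvd (Nat.gcd_dvd_left _ _) (Nat.gcd_dvd_left _ _)
  have h2 : orderOf x ∣ Nat.gcd (orderOf x) P * Nat.gcd (orderOf x) N := by
    have h := gcd_mul_dvd_mul_gcd (orderOf x) P N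
    rwa [gcd_eq_nat_gcd, gcd_eq_nat_gcd, gcd_eq_nat_gcd, Nat.gcd_eq_left hd] at h
  have hd_eq : orderOf x = Nat.gcd (orderOf x) P * Nat.gcd (orderOf x) N :=
    Nat.dvd_antisymm h2 h1
  have hapos : 0 < Nat.gcd (orderOf x) P :=
    Nat.gcd_pos_of_pos_right _ (Nat.pos_of_ne_zero hP)
  have hbpos : 0 < Nat.gcd (orderOf x) N :=
    Nat.gcd_pos_of_pos_right _ (Nat.pos_of_ne_zero hN)
  have haN : (Nat.gcd (orderOf x) P).Coprime N :=
    Nat.Coprime.coprime_dvd_left (Nat.gcd_dvd_right _ _) hPN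
  have hbP : (Nat.gcd (orderOf x) N).Coprime P :=
    Nat.Coprime.coprime_dvd_left (Nat.gcd_dvd_right _ _) hPN.symm
  have eN : orderOf (x ^ N) = Nat.gcd (orderOf x) P := by
    rw [orderOf_pow' x hN]
    conv_lhs => rw [hd_eq]
    rw [Nat.Coprime.gcd_mul_left_cancel _ haN,
      Nat.gcd_eq_left (Nat.gcd_dvd_right (orderOf x) N),
      Nat.mul_div_cancel _ hbpos]
  have eP : orderOf (x ^ P) = Nat.gcd (orderOf x) N := by
    rw [orderOf_pow' x hP]
    conv_lhs => rw [hd_eq]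
    rw [Nat.Coprime.gcd_mul_right_cancel _ hbP,
      Nat.gcd_eq_left (Nat.gcd_dvd_right (orderOf x) P),
      Nat.mul_div_cancel_left _ hapos]
  rw [eN, eP]
  exact hd_eq

/-- reindexing a sum over a subgroup-finset along a coprime power map. -/
lemma sum_pow_reindex {m c : ℕ} (hcm : Nat.Coprime c m) {s : Finset A}
    (hs : IsSubgroupFinset s) (hords : ∀ x ∈ s, x ^ m = 1) (F : A → ℕ) :
    ∑ x ∈ s, F (x ^ c) = ∑ x ∈ s, F x := by
  obtain ⟨u, w, huw⟩ := Int.isCoprime_iff_gcd_eq_one.2 (by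
    rw [Int.gcd_natCast_natCast]; exact hcm)
  -- huw : u * c + w * m = 1
  refine Finset.sum_nbij' (fun x => x ^ c) (fun y => y ^ u) ?_ ?_ ?_ ?_ ?_
  · intro x hx; exact hs.pow_mem hx c
  · intro y hy; exact hs.zpow_mem hy u
  · intro x hx
    show (x ^ c) ^ u = x
    rw [← zpow_natCast x c, ← zpow_mul]
    have : x ^ ((c : ℤ) * u) = x ^ (1 : ℤ) :=
      zpow_eq_zpow_of_dvd_sub (hords x hx) ⟨-w, by linear_combination huw⟩
    rw [this, zpow_one]
  · intro y hy
    show (y ^ u) ^ c = y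
    rw [← zpow_natCast (y ^ u) c, ← zpow_mul]
    have : y ^ (u * (c : ℤ)) = y ^ (1 : ℤ) :=
      zpow_eq_zpow_of_dvd_sub (hords y hy) ⟨-w, by linear_combination huw⟩
    rw [this, zpow_one]
  · intro x hx; rfl

/-- splitting the coset sum along a coprime factorization `P * N`. -/
lemma coset_sum_split {P N : ℕ} (hP : P ≠ 0) (hN : N ≠ 0) (hPN : Nat.Coprime P N)
    (g : A) (hg : g ^ (P * N) = 1) {t : Finset A} (ht : IsSubgroupFinset t)
    (hord : ∀ x ∈ t, x ^ (P * N) = 1) :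
    ∑ x ∈ t, orderOf (g * x)
      = (∑ a ∈ t.filter fun x => x ^ P = 1, orderOf (g ^ N * a))
        * (∑ b ∈ t.filter fun x => x ^ N = 1, orderOf (g ^ P * b)) := by
  obtain ⟨u, w, huw⟩ := Int.isCoprime_iff_gcd_eq_one.2 (by
    rw [Int.gcd_natCast_natCast]; exact hPN)
  -- huw : u * P + w * N = 1
  set tp := t.filter fun x => x ^ P = 1 with htp_def
  set tq := t.filter fun x => x ^ N = 1 with htq_def
  have htp : IsSubgroupFinset tp := ht.filter_pow P
  have htq : IsSubgroupFinset tq := ht.filter_pow N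
  have step1 : ∑ x ∈ t, orderOf (g * x)
      = ∑ q ∈ tp ×ˢ tq, orderOf (g ^ N * q.1 ^ N) * orderOf (g ^ P * q.2 ^ P) := by
    refine Finset.sum_nbij' (fun x => (x ^ (w * (N : ℤ)), x ^ (u * (P : ℤ))))
      (fun q => q.1 * q.2) ?_ ?_ ?_ ?_ ?_
    · intro x hx
      rw [Finset.mem_product]
      constructor
      · rw [htp_def, mem_filter]
        refine ⟨ht.zpow_mem hx _, ?_⟩
        rw [← zpow_natCast (x ^ (w * (N : ℤ))) P, ← zpow_mul]
        have : x ^ (w * (N : ℤ) * P) = x ^ (0 : ℤ) :=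
          zpow_eq_zpow_of_dvd_sub (hord x hx) ⟨w, by push_cast; ring⟩
        rw [this, zpow_zero]
      · rw [htq_def, mem_filter]
        refine ⟨ht.zpow_mem hx _, ?_⟩
        rw [← zpow_natCast (x ^ (u * (P : ℤ))) N, ← zpow_mul]
        have : x ^ (u * (P : ℤ) * N) = x ^ (0 : ℤ) :=
          zpow_eq_zpow_of_dvd_sub (hord x hx) ⟨u, by push_cast; ring⟩
        rw [this, zpow_zero]
    · intro q hq
      rw [Finset.mem_product, htp_def, htq_def, mem_filter, mem_filter] at hq
      exact ht.mul_mem hq.1.1 hq.2.1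
    · intro x hx
      show x ^ (w * (N : ℤ)) * x ^ (u * (P : ℤ)) = x
      rw [← zpow_add]
      have : w * (N : ℤ) + u * (P : ℤ) = 1 := by linarith
      rw [this, zpow_one]
    · intro q hq
      rw [Finset.mem_product, htp_def, htq_def, mem_filter, mem_filter] at hq
      obtain ⟨⟨ha, haP⟩, hb, hbN⟩ := hq
      show ((q.1 * q.2) ^ (w * (N : ℤ)), (q.1 * q.2) ^ (u * (P : ℤ))) = q
      have e1 : (q.1 * q.2) ^ (w * (N : ℤ)) = q.1 := by
        rw [mul_zpow]
        have h2 : q.2 ^ (w * (N : ℤ)) = q.2 ^ (0 : ℤ) :=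
          zpow_eq_zpow_of_dvd_sub hbN ⟨w, by ring⟩
        have h1 : q.1 ^ (w * (N : ℤ)) = q.1 ^ (1 : ℤ) :=
          zpow_eq_zpow_of_dvd_sub haP ⟨-u, by linear_combination huw⟩
        rw [h1, h2, zpow_one, zpow_zero, mul_one]
      have e2 : (q.1 * q.2) ^ (u * (P : ℤ)) = q.2 := by
        rw [mul_zpow]
        have h1 : q.1 ^ (u * (P : ℤ)) = q.1 ^ (0 : ℤ) :=
          zpow_eq_zpow_of_dvd_sub haP ⟨u, by ring⟩
        have h2 : q.2 ^ (u * (P : ℤ)) = q.2 ^ (1 : ℤ) :=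
          zpow_eq_zpow_of_dvd_sub hbN ⟨-w, by linear_combination huw⟩
        rw [h1, h2, zpow_one, zpow_zero, one_mul]
      rw [Prod.ext_iff]
      exact ⟨e1, e2⟩
    · intro x hx
      show orderOf (g * x)
          = orderOf (g ^ N * (x ^ (w * (N : ℤ))) ^ N)
            * orderOf (g ^ P * (x ^ (u * (P : ℤ))) ^ P)
      have c1 : (x ^ (w * (N : ℤ))) ^ N = x ^ N := by
        rw [← zpow_natCast (x ^ (w * (N : ℤ))) N, ← zpow_mul]
        have : x ^ (w * (N : ℤ) * N) = x ^ ((N : ℕ) : ℤ) :=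
          zpow_eq_zpow_of_dvd_sub (hord x hx)
            ⟨-u, by push_cast; linear_combination (N : ℤ) * huw⟩
        rw [this, zpow_natCast]
      have c2 : (x ^ (u * (P : ℤ))) ^ P = x ^ P := by
        rw [← zpow_natCast (x ^ (u * (P : ℤ))) P, ← zpow_mul]
        have : x ^ (u * (P : ℤ) * P) = x ^ ((P : ℕ) : ℤ) :=
          zpow_eq_zpow_of_dvd_sub (hord x hx)
            ⟨-w, by push_cast; linear_combination (P : ℤ) * huw⟩
        rw [this, zpow_natCast]
      rw [c1, c2, ← mul_pow, ← mul_pow]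
      have hgx : (g * x) ^ (P * N) = 1 := by
        rw [mul_pow, hg, hord x hx, one_mul]
      exact orderOf_eq_mul_of_coprime hP hN hPN hgx
  rw [step1, Finset.sum_product]
  dsimp only
  rw [← Finset.sum_mul_sum]
  congr 1
  · exact sum_pow_reindex hPN.symm htp
      (fun a haa => (mem_filter.1 haa).2) (fun z => orderOf (g ^ N * z))
  · exact sum_pow_reindex hPN htq
      (fun b hbb => (mem_filter.1 hbb).2) (fun z => orderOf (g ^ P * z))

/-- Main coset lemma in a commutative group: the subgroup minimizes the
sum of orders among its cosets. -/
lemma coset_sum_le : ∀ (M : ℕ), M ≠ 0 → ∀ (g : A) (t : Finset A), orderOf g ∣ M →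
    IsSubgroupFinset t → (∀ x ∈ t, orderOf x ∣ M) →
    ∑ x ∈ t, orderOf x ≤ ∑ x ∈ t, orderOf (g * x) := by
  intro M
  induction M using Nat.strong_induction_on with
  | _ M IH =>
  intro hM g t hg ht hord
  rcases eq_or_ne M 1 with rfl | hM1
  · have hg1 : g = 1 := orderOf_eq_one_iff.mp (Nat.dvd_one.mp hg)
    simp [hg1]
  · set p := M.minFac with hp_def
    have hp : p.Prime := Nat.minFac_prime hM1
    set a := M.factorization p with ha_def
    set P := p ^ a with hP_def
    set N := M / P with hN_def
    have hMPN : P * N = M := Nat.ordProj_mul_ordCompl_eq_self M p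
    have hpN : ¬ p ∣ N := Nat.not_dvd_ordCompl hp hM
    have hNne : N ≠ 0 := by
      intro h; rw [h, mul_zero] at hMPN; exact hM hMPN.symm
    have hPne : P ≠ 0 := pow_ne_zero _ hp.pos.ne'
    have hPN : Nat.Coprime P N :=
      Nat.Coprime.pow_left _ ((Nat.Prime.coprime_iff_not_dvd hp).2 hpN)
    have hapos : 0 < a :=
      Nat.Prime.factorization_pos_of_dvd hp hM (Nat.minFac_dvd M)
    have hP1 : 1 < P := by
      calc 1 < p := hp.one_lt
        _ = p ^ 1 := (pow_one p).symm
        _ ≤ P := Nat.pow_le_pow_right hp.pos hapos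
    rcases eq_or_ne N 1 with hN1 | hN1
    · have hMP : M = p ^ a := by rw [← hMPN, hN1, mul_one, hP_def]
      refine coset_sum_le_pPow (K := a) hp g ht ?_ ?_
      · rw [← hMP]; exact hg
      · intro x hx; rw [← hMP]; exact hord x hx
    · have hNlt : N < M := by
        have hdvd : N ∣ M := ⟨P, by rw [← hMPN, mul_comm]⟩
        refine Nat.lt_of_le_of_ne (Nat.le_of_dvd (Nat.pos_of_ne_zero hM) hdvd) ?_
        intro h
        rw [h] at hMPN
        nlinarith [Nat.pos_of_ne_zero hM]
      set tp := t.filter fun x => x ^ P = 1 with htp_def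
      set tq := t.filter fun x => x ^ N = 1 with htq_def
      have htp : IsSubgroupFinset tp := ht.filter_pow P
      have htq : IsSubgroupFinset tq := ht.filter_pow N
      have hgPN : g ^ (P * N) = 1 := by
        rw [hMPN]; exact orderOf_dvd_iff_pow_eq_one.1 hg
      have hordPN : ∀ x ∈ t, x ^ (P * N) = 1 := by
        intro x hx; rw [hMPN]; exact orderOf_dvd_iff_pow_eq_one.1 (hord x hx)
      have eq1 := coset_sum_split hPne hNne hPN g hgPN ht hordPN
      have eq2 := coset_sum_split hPne hNne hPN (1 : A) (one_pow _) ht hordPN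
      simp only [one_pow, one_mul] at eq2
      rw [eq1, eq2]
      have hfac1 : ∑ x ∈ tp, orderOf x ≤ ∑ x ∈ tp, orderOf (g ^ N * x) := by
        refine coset_sum_le_pPow (K := a) hp (g ^ N) htp ?_ ?_
        · apply orderOf_dvd_iff_pow_eq_one.2
          rw [← pow_mul, mul_comm N]
          exact hgPN
        · intro x hx
          exact orderOf_dvd_iff_pow_eq_one.2 (mem_filter.1 hx).2
      have hfac2 : ∑ x ∈ tq, orderOf x ≤ ∑ x ∈ tq, orderOf (g ^ P * x) := by
        refine IH N hNlt hNne (g ^ P) tq ?_ htq ?_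
        · apply orderOf_dvd_iff_pow_eq_one.2
          rw [← pow_mul]
          exact hgPN
        · intro x hx
          exact orderOf_dvd_iff_pow_eq_one.2 (mem_filter.1 hx).2
      exact Nat.mul_le_mul hfac1 hfac2

end CommAux

/-- A central subgroup's sum of orders compares to every coset's sum. -/
lemma central_coset_sum (G : Type*) [Group G] [Fintype G] (H : Subgroup G)
    (hH : H ≤ Subgroup.center G) (g : G) :
    ∑ x : H, orderOf (x : G) ≤ ∑ x : H, orderOf (g * (x : G)) := by
  classical
  have hcomm : ∀ x ∈ insert g (H : Set G), ∀ y ∈ insert g (H : Set G),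
      x * y = y * x := by
    intro x hx y hy
    rcases Set.mem_insert_iff.1 hx with rfl | hx
    · rcases Set.mem_insert_iff.1 hy with rfl | hy
      · rfl
      · exact Subgroup.mem_center_iff.1 (hH hy) x
    · exact (Subgroup.mem_center_iff.1 (hH hx) y).symm
  set A : Subgroup G := Subgroup.closure (insert g (H : Set G)) with hA_def
  letI : CommGroup A := Subgroup.closureCommGroupOfComm hcomm
  letI : Fintype A := Fintype.ofFinite A
  have hgA : g ∈ A := Subgroup.subset_closure (Set.mem_insert _ _)
  have hHA : ∀ x : G, x ∈ H → x ∈ A := fun x hx =>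
    Subgroup.subset_closure (Set.mem_insert_of_mem _ hx)
  set gA : A := ⟨g, hgA⟩ with hgA_def
  set t : Finset A := Finset.univ.filter (fun x : A => (x : G) ∈ H) with ht_def
  have ht : IsSubgroupFinset t := by
    constructor
    · rw [ht_def, mem_filter]
      exact ⟨Finset.mem_univ _, by simp [Subgroup.one_mem]⟩
    · intro x hx y hy
      rw [ht_def, mem_filter] at hx hy ⊢
      exact ⟨Finset.mem_univ _, H.mul_mem hx.2 (H.inv_mem hy.2)⟩
  have hordcoe : ∀ x : A, orderOf x = orderOf (x : G) := fun x =>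
    (orderOf_injective A.subtype (Subgroup.subtype_injective A) x).symm
  have hord : ∀ x ∈ t, orderOf x ∣ Fintype.card G := by
    intro x _
    rw [hordcoe]
    exact orderOf_dvd_card
  have hgord : orderOf gA ∣ Fintype.card G := by
    rw [hordcoe gA]
    exact orderOf_dvd_card
  have key := coset_sum_le (Fintype.card G) Fintype.card_ne_zero gA t hgord ht hord
  have transfer : ∀ F : G → ℕ,
      ∑ x : H, F (x : G) = ∑ x ∈ t, F ((x : A) : G) := by
    intro F
    refine Finset.sum_bij' (fun (x : H) _ => (⟨(x : G), hHA _ x.2⟩ : A))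
      (fun y hy => (⟨(y : G), by rw [ht_def, mem_filter] at hy; exact hy.2⟩ : H))
      ?_ ?_ ?_ ?_ ?_
    · intro x _
      rw [ht_def, mem_filter]
      exact ⟨Finset.mem_univ _, x.2⟩
    · intro y _; exact Finset.mem_univ _
    · intro x _; rfl
    · intro y _; rfl
    · intro x _; rfl
  have e1 : ∑ x : H, orderOf (x : G) = ∑ x ∈ t, orderOf x := by
    rw [transfer (fun z => orderOf z)]
    exact Finset.sum_congr rfl (fun x _ => (hordcoe x).symm)
  have e2 : ∑ x : H, orderOf (g * (x : G)) = ∑ x ∈ t, orderOf (gA * x) := by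
    rw [transfer (fun z => orderOf (g * z))]
    refine Finset.sum_congr rfl (fun x _ => ?_)
    rw [hordcoe (gA * x)]
    rfl
  rw [e1, e2]
  exact key

open scoped Classical in
/-- **Lemma 2.6.** Let `G` be a finite group and `N` a subgroup of `G`. Then
`o(N ∩ Z(G)) ≤ o(G)`, where `o` denotes the average order and `Z(G)` the center. -/
theorem avg_order_inter_center_le_avg_order
    (G : Type*) [Group G] [Fintype G] (N : Subgroup G) :
    (∑ x : ↥(N ⊓ Subgroup.center G), (orderOf (x : G) : ℝ)) /
        (Nat.card ↥(N ⊓ Subgroup.center G) : ℝ) ≤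
      (∑ g : G, (orderOf g : ℝ)) / (Fintype.card G : ℝ) := by
  classical
  set H := N ⊓ Subgroup.center G with hH_def
  have hH : H ≤ Subgroup.center G := inf_le_right
  have key : ∀ g : G, ∑ x : H, orderOf (x : G) ≤ ∑ x : H, orderOf (g * (x : G)) :=
    central_coset_sum G H hH
  have main : Fintype.card G * ∑ x : H, orderOf (x : G)
      ≤ Fintype.card H * ∑ g : G, orderOf g := by
    calc Fintype.card G * ∑ x : H, orderOf (x : G)
        = ∑ _g : G, ∑ x : H, orderOf (x : G) := by
          rw [Finset.sum_const, Finset.card_univ, smul_eq_mul]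
      _ ≤ ∑ g : G, ∑ x : H, orderOf (g * (x : G)) :=
          Finset.sum_le_sum (fun g _ => key g)
      _ = ∑ x : H, ∑ g : G, orderOf (g * (x : G)) := Finset.sum_comm
      _ = ∑ x : H, ∑ g : G, orderOf g := by
          refine Finset.sum_congr rfl (fun x _ => ?_)
          exact Fintype.sum_equiv (Equiv.mulRight ((x : G)))
            (fun g => orderOf (g * (x : G))) (fun g => orderOf g) (fun g => rfl)
      _ = Fintype.card H * ∑ g : G, orderOf g := by
          rw [Finset.sum_const, Finset.card_univ, smul_eq_mul]
  have hchpos : (0 : ℝ) < (Nat.card H : ℝ) := by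
    exact_mod_cast Nat.card_pos
  have hcgpos : (0 : ℝ) < (Fintype.card G : ℝ) := by
    exact_mod_cast Fintype.card_pos
  rw [div_le_div_iff₀ hchpos hcgpos]
  have hNc : ((Nat.card H : ℕ) : ℝ) = ((Fintype.card H : ℕ) : ℝ) := by
    rw [Nat.card_eq_fintype_card]
  rw [hNc]
  calc (∑ x : ↥H, (orderOf (x : G) : ℝ)) * (Fintype.card G : ℝ)
      = (Fintype.card G : ℝ) * ∑ x : ↥H, (orderOf (x : G) : ℝ) := by ring
    _ ≤ (Fintype.card H : ℝ) * ∑ g : G, (orderOf g : ℝ) := by exact_mod_cast main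
    _ = (∑ g : G, (orderOf g : ℝ)) * (Fintype.card H : ℝ) := by ring
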